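/- The polynomial ring k[ξ₁,…,ξₙ] is a finitely generated module over the k-subalgebra S of k[ξ₁,…,ξₙ] generated by the set {σ'(Q) : Q ∈ B, Q ≠ 0}. -/

import Mathlib

/-!
Setup: `k` a field of characteristic zero, `R = k[[x₁,…,xₙ]] = MvPowerSeries (Fin n) k`,
and `D = R[∂₁,…,∂ₙ]` the ring of partial differential operators, realized inside
`Module.End k R`.  An operator is represented by its (unique) finitely supported family
of coefficients `p : (Fin n →₀ ℕ) →₀ R`, giving the operator `toOp p = Σ_α p_α ∂^α`.
A commutative `k`-subalgebra `B` of `D` is modelled as a commutative `k`-algebra together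
with an injective `k`-algebra homomorphism `ι` into `Module.End k R` all of whose values
are differential operators.
-/

noncomputable section

open scoped BigOperators

variable (n : ℕ) (k : Type) [Field k] [CharZero k]

/-- The partial derivative `∂ᵢ` as a `k`-linear endomorphism of `k[[x₁,…,xₙ]]`. -/
def derivOp (i : Fin n) : Module.End k (MvPowerSeries (Fin n) k) where
  toFun f := fun m => ((m i : k) + 1) * f (m + Finsupp.single i 1)
  map_add' f g := by funext m; exact mul_add _ _ _
  map_smul' c f := by funext m; exact mul_left_comm _ _ _

/-- The operator of multiplication by `g ∈ k[[x₁,…,xₙ]]`. -/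
def mulOp (g : MvPowerSeries (Fin n) k) : Module.End k (MvPowerSeries (Fin n) k) :=
  LinearMap.mulLeft k g

/-- The differential operator `Σ_α p_α ∂^α` associated to a finitely supported
coefficient family `p`. -/
def toOp (p : (Fin n →₀ ℕ) →₀ MvPowerSeries (Fin n) k) :
    Module.End k (MvPowerSeries (Fin n) k) :=
  p.sum fun α g => mulOp n k g * (List.ofFn fun i : Fin n => (derivOp n k i) ^ (α i)).prod

/-- The total degree `|α|` of a multi-index. -/
def degOf (α : Fin n →₀ ℕ) : ℕ := α.sum fun _ e => e

/-- The order of the operator with coefficient family `p`: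
`ord(P) = max { |α| : p_α ≠ 0 }`. -/
def ordOf (p : (Fin n →₀ ℕ) →₀ MvPowerSeries (Fin n) k) : ℕ :=
  p.support.sup (degOf n)

/-- The principal symbol `σ(P) = Σ_{|α| = ord P} p_α ξ^α ∈ R[ξ₁,…,ξₙ]`. -/
def symbolFull (p : (Fin n →₀ ℕ) →₀ MvPowerSeries (Fin n) k) :
    MvPolynomial (Fin n) (MvPowerSeries (Fin n) k) :=
  ∑ α ∈ p.support.filter (fun α => degOf n α = ordOf n k p),
    MvPolynomial.monomial α (p α)

/-- The reduction `σ'(P) = Σ_{|α| = ord P} p_α(0) ξ^α ∈ k[ξ₁,…,ξₙ]` of the principal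
symbol modulo the maximal ideal `(x₁,…,xₙ)`. -/
def symbol0 (p : (Fin n →₀ ℕ) →₀ MvPowerSeries (Fin n) k) : MvPolynomial (Fin n) k :=
  ∑ α ∈ p.support.filter (fun α => degOf n α = ordOf n k p),
    MvPolynomial.monomial α (MvPowerSeries.constantCoeff (p α))

set_option linter.unusedSectionVars false

-- Part 1 : injectivity auxiliaries

lemma derivOp_apply (i : Fin n) (f : MvPowerSeries (Fin n) k) (m : Fin n →₀ ℕ) :
    derivOp n k i f m = ((m i : k) + 1) * f (m + Finsupp.single i 1) := rfl


lemma monomial_val (γ δ : Fin n →₀ ℕ) (a : k) :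
    (MvPowerSeries.monomial γ a : MvPowerSeries (Fin n) k) δ = if δ = γ then a else 0 := by
  classical
  have := MvPowerSeries.coeff_monomial (R := k) δ γ a
  simpa [MvPowerSeries.coeff_apply] using this

lemma derivOp_monomial (i : Fin n) (β : Fin n →₀ ℕ) (c : k) :
    derivOp n k i (MvPowerSeries.monomial β c)
      = (β i : k) • MvPowerSeries.monomial (β - Finsupp.single i 1) c := by
  classical
  funext m
  rw [derivOp_apply]
  have hsmul : ∀ (f : MvPowerSeries (Fin n) k) (a : k) (δ : Fin n →₀ ℕ),
      (a • f) δ = a * f δ := fun _ _ _ => rfl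
  rw [hsmul, monomial_val, monomial_val]
  by_cases hb : β i = 0
  · have h1 : m + Finsupp.single i 1 ≠ β := by
      intro h
      have := congrArg (fun γ => γ i) h
      simp [hb] at this
    rw [if_neg h1]
    by_cases h2 : m = β - Finsupp.single i 1
    · simp [hb]
    · simp [h2]
  · have hle : Finsupp.single i 1 ≤ β := by
      rw [Finsupp.single_le_iff]; omega
    have hiff : m + Finsupp.single i 1 = β ↔ m = β - Finsupp.single i 1 := by
      constructor
      · intro h; exact eq_tsub_of_add_eq h
      · intro h; rw [h]; exact tsub_add_cancel_of_le hle
    by_cases h2 : m = β - Finsupp.single i 1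
    · rw [if_pos (hiff.mpr h2), if_pos h2]
      have hmi : m i = β i - 1 := by
        rw [h2, Finsupp.tsub_apply, Finsupp.single_eq_same]
      rw [hmi]
      have : ((β i - 1 : ℕ) : k) + 1 = (β i : k) := by
        have h3 : β i - 1 + 1 = β i := by omega
        rw [← h3]; push_cast; ring
      rw [this]
    · rw [if_neg (fun h => h2 (hiff.mp h)), if_neg h2]
      ring

lemma descFactor_key (e : ℕ) (b : ℕ) :
    (b : k) * ∏ t ∈ Finset.range e, (((b - 1 : ℕ) : k) - (t : k))
      = ∏ t ∈ Finset.range (e + 1), ((b : k) - (t : k)) := by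
  cases b with
  | zero =>
    rw [Finset.prod_eq_zero (Finset.mem_range.mpr (Nat.succ_pos e))
      (by simp : ((0 : ℕ) : k) - ((0 : ℕ) : k) = 0)]
    simp
  | succ s =>
    rw [Finset.prod_range_succ']
    have h1 : ∀ t ∈ Finset.range e, ((s + 1 : ℕ) : k) - ((t + 1 : ℕ) : k)
        = ((s + 1 - 1 : ℕ) : k) - (t : k) := by
      intro t _; push_cast; ring
    rw [Finset.prod_congr rfl h1]
    push_cast
    ring

lemma derivOp_pow_monomial (i : Fin n) (e : ℕ) (β : Fin n →₀ ℕ) (c : k) :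
    ((derivOp n k i) ^ e) (MvPowerSeries.monomial β c)
      = (∏ t ∈ Finset.range e, ((β i : k) - t)) •
          MvPowerSeries.monomial (β - Finsupp.single i e) c := by
  induction e generalizing β with
  | zero => simp
  | succ e ih =>
    rw [pow_succ, Module.End.mul_apply, derivOp_monomial, map_smul, ih]
    rw [smul_smul]
    have hidx : β - Finsupp.single i 1 - Finsupp.single i e = β - Finsupp.single i (e + 1) := by
      rw [tsub_tsub, ← Finsupp.single_add, Nat.add_comm 1 e]
    rw [hidx]
    congr 1
    have happ : ((β - Finsupp.single i 1 : Fin n →₀ ℕ)) i = β i - 1 := by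
      rw [Finsupp.tsub_apply, Finsupp.single_eq_same]
    rw [happ]
    exact descFactor_key k e (β i)

lemma listProd_monomial (α β : Fin n →₀ ℕ) (c : k) :
    ∀ (L : List (Fin n)), L.Nodup →
      ((L.map fun i => (derivOp n k i) ^ (α i)).prod) (MvPowerSeries.monomial β c)
        = (∏ i ∈ L.toFinset, ∏ t ∈ Finset.range (α i), ((β i : k) - t)) •
            MvPowerSeries.monomial (β - L.toFinset.sum fun i => Finsupp.single i (α i)) c := by
  classical
  intro L
  induction L with
  | nil => simp
  | cons i L' ih =>
    intro hnd
    have hiL : i ∉ L' := (List.nodup_cons.mp hnd).1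
    have hnd' : L'.Nodup := (List.nodup_cons.mp hnd).2
    rw [List.map_cons, List.prod_cons, Module.End.mul_apply, ih hnd', map_smul,
      derivOp_pow_monomial]
    have hiF : i ∉ L'.toFinset := fun h => hiL (List.mem_toFinset.mp h)
    set m' := L'.toFinset.sum fun j => Finsupp.single j (α j) with hm'
    have hmi : ((β - m' : Fin n →₀ ℕ)) i = β i := by
      rw [Finsupp.tsub_apply]
      have : m' i = 0 := by
        rw [hm', Finsupp.finset_sum_apply]
        apply Finset.sum_eq_zero
        intro j hj
        exact Finsupp.single_eq_of_ne (fun h => hiF (h ▸ hj))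
      rw [this, Nat.sub_zero]
    rw [hmi, smul_smul]
    have hto : (i :: L').toFinset = insert i L'.toFinset := by simp
    rw [hto, Finset.prod_insert hiF, Finset.sum_insert hiF]
    rw [tsub_tsub, add_comm (Finsupp.single i (α i)) m']
    rw [mul_comm]

lemma mulOp_apply (g f : MvPowerSeries (Fin n) k) : mulOp n k g f = g * f := rfl

lemma toOp_apply_monomial_min (p : (Fin n →₀ ℕ) →₀ MvPowerSeries (Fin n) k)
    (α₀ : Fin n →₀ ℕ) (hmem : α₀ ∈ p.support)
    (hmin : ∀ β ∈ p.support, β ≤ α₀ → β = α₀) :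
    ∃ c : k, c ≠ 0 ∧ toOp n k p (MvPowerSeries.monomial α₀ 1) = c • p α₀ := by
  classical
  refine ⟨∏ i : Fin n, ∏ t ∈ Finset.range (α₀ i), ((α₀ i : k) - t), ?_, ?_⟩
  · rw [Finset.prod_ne_zero_iff]
    intro i _
    rw [Finset.prod_ne_zero_iff]
    intro t ht
    rw [Finset.mem_range] at ht
    have : ((α₀ i : k) - t) = ((α₀ i - t : ℕ) : k) := by
      have := Nat.cast_sub (le_of_lt ht) (R := k)
      rw [this]
    rw [this]
    have : α₀ i - t ≠ 0 := by omega
    exact_mod_cast Nat.cast_ne_zero.mpr this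
  · rw [toOp, Finsupp.sum, LinearMap.coe_sum, Finset.sum_apply]
    rw [Finset.sum_eq_single_of_mem α₀ hmem]
    · rw [Module.End.mul_apply, List.ofFn_eq_map,
        listProd_monomial n k α₀ α₀ 1 (List.finRange n) (List.nodup_finRange n),
        List.toFinset_finRange]
      have h0 : α₀ - (Finset.univ.sum fun i => Finsupp.single i (α₀ i)) = 0 := by
        rw [Finsupp.univ_sum_single]
        simp
      rw [h0, MvPowerSeries.monomial_zero_one, map_smul, mulOp_apply, mul_one]
    · intro β hβ hne
      rw [Module.End.mul_apply, List.ofFn_eq_map,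
        listProd_monomial n k β α₀ 1 (List.finRange n) (List.nodup_finRange n),
        List.toFinset_finRange]
      have : ¬ β ≤ α₀ := fun h => hne (hmin β hβ h)
      rw [Finsupp.le_def] at this
      push_neg at this
      obtain ⟨j, hj⟩ := this
      have hz : (∏ i : Fin n, ∏ t ∈ Finset.range (β i), ((α₀ i : k) - t)) = 0 := by
        apply Finset.prod_eq_zero (Finset.mem_univ j)
        apply Finset.prod_eq_zero (Finset.mem_range.mpr hj)
        simp
      rw [hz, zero_smul, map_zero]

lemma toOp_ne_zero (p : (Fin n →₀ ℕ) →₀ MvPowerSeries (Fin n) k) (hp : p ≠ 0) :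
    toOp n k p ≠ 0 := by
  classical
  have hsupp : (p.support : Set (Fin n →₀ ℕ)).Nonempty := by
    rw [Finset.coe_nonempty, Finsupp.support_nonempty_iff]
    exact hp
  obtain ⟨α₀, hmem, hmin⟩ := Set.Finite.exists_minimal
    (Finset.finite_toSet p.support) hsupp
  obtain ⟨c, hc, heq⟩ := toOp_apply_monomial_min n k p α₀ (by exact_mod_cast hmem)
    (fun β hβ hle => le_antisymm hle (hmin (by exact_mod_cast hβ) hle))
  intro h
  have : toOp n k p (MvPowerSeries.monomial α₀ 1) = 0 := by rw [h]; rfl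
  rw [heq] at this
  have hpα : p α₀ ≠ 0 := Finsupp.mem_support_iff.mp hmem
  exact hpα (by simpa [hc] using (smul_eq_zero.mp this).resolve_left hc)

-- Part 2 : symbols

lemma degOf_eq_degree (α : Fin n →₀ ℕ) : degOf n α = α.degree := by
  rfl

lemma map_symbolFull (p : (Fin n →₀ ℕ) →₀ MvPowerSeries (Fin n) k) :
    MvPolynomial.map (MvPowerSeries.constantCoeff) (symbolFull n k p)
      = symbol0 n k p := by
  rw [symbolFull, symbol0, map_sum]
  exact Finset.sum_congr rfl fun α _ => MvPolynomial.map_monomial _ _ _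

lemma symbol0_isHomogeneous (p : (Fin n →₀ ℕ) →₀ MvPowerSeries (Fin n) k) :
    (symbol0 n k p).IsHomogeneous (ordOf n k p) := by
  apply MvPolynomial.IsHomogeneous.sum
  intro α hα
  apply MvPolynomial.isHomogeneous_monomial
  rw [← degOf_eq_degree]
  exact (Finset.mem_filter.mp hα).2

lemma degOf_add (α β : Fin n →₀ ℕ) : degOf n (α + β) = degOf n α + degOf n β := by
  rw [degOf, degOf, degOf]
  exact Finsupp.sum_add_index' (fun _ => rfl) (fun _ _ _ => rfl)

lemma apply_le_degOf (γ : Fin n →₀ ℕ) (j : Fin n) : γ j ≤ degOf n γ := by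
  classical
  by_cases h : γ j = 0
  · omega
  · rw [degOf, Finsupp.sum]
    exact Finset.single_le_sum (fun _ _ => Nat.zero_le _) (Finsupp.mem_support_iff.mpr h)

-- Part 3 : homogeneous decomposition

lemma comp_mul_homog (d D : ℕ) (hdD : d ≤ D) (h f : MvPolynomial (Fin n) k)
    (hf : f.IsHomogeneous d) :
    MvPolynomial.homogeneousComponent D (h * f)
      = MvPolynomial.homogeneousComponent (D - d) h * f := by
  classical
  conv_lhs => rw [← MvPolynomial.sum_homogeneousComponent h]
  rw [Finset.sum_mul, map_sum]
  have hterm : ∀ e, MvPolynomial.homogeneousComponent D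
      (MvPolynomial.homogeneousComponent e h * f)
      = if D = e + d then MvPolynomial.homogeneousComponent e h * f else 0 := by
    intro e
    apply MvPolynomial.homogeneousComponent_of_mem
    rw [MvPolynomial.mem_homogeneousSubmodule]
    exact (MvPolynomial.homogeneousComponent_isHomogeneous e h).mul hf
  by_cases hle : D - d ≤ h.totalDegree
  · rw [Finset.sum_congr rfl fun e _ => hterm e]
    rw [Finset.sum_eq_single_of_mem (D - d)
      (Finset.mem_range.mpr (by omega))]
    · rw [if_pos (by omega)]
    · intro e _ hne
      rw [if_neg (by omega)]
  · have hz : MvPolynomial.homogeneousComponent (D - d) h = 0 :=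
      MvPolynomial.homogeneousComponent_eq_zero _ _ (by omega)
    rw [hz, zero_mul]
    apply Finset.sum_eq_zero
    intro e he
    rw [hterm e, if_neg (by rw [Finset.mem_range] at he; omega)]

lemma homog_rep (f : Fin n → MvPolynomial (Fin n) k) (d : Fin n → ℕ)
    (hf : ∀ i, (f i).IsHomogeneous (d i)) (D : ℕ) (hdD : ∀ i, d i ≤ D)
    (q : MvPolynomial (Fin n) k) (hq : q.IsHomogeneous D)
    (hmem : q ∈ Ideal.span (Set.range f)) :
    ∃ g : Fin n → MvPolynomial (Fin n) k,
      (∀ i, (g i).IsHomogeneous (D - d i)) ∧ q = ∑ i, g i * f i := by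
  classical
  rw [Ideal.span] at hmem
  obtain ⟨c, hc⟩ := (Submodule.mem_span_range_iff_exists_fun _).mp hmem
  simp only [smul_eq_mul] at hc
  refine ⟨fun i => MvPolynomial.homogeneousComponent (D - d i) (c i),
    fun i => MvPolynomial.homogeneousComponent_isHomogeneous _ _, ?_⟩
  have h1 := congrArg (MvPolynomial.homogeneousComponent D) hc
  rw [map_sum] at h1
  have h2 : MvPolynomial.homogeneousComponent D q = q := by
    rw [MvPolynomial.homogeneousComponent_of_mem
      ((MvPolynomial.mem_homogeneousSubmodule D q).mpr hq), if_pos rfl]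
  rw [← h2, ← h1]
  exact Finset.sum_congr rfl fun i _ =>
    comp_mul_homog n k (d i) D (hdD i) (c i) (f i) (hf i)

-- Part 3 main

theorem finite_of_homog (S : Subalgebra k (MvPolynomial (Fin n) k))
    (f : Fin n → MvPolynomial (Fin n) k) (d : Fin n → ℕ)
    (hf : ∀ i, (f i).IsHomogeneous (d i)) (hd : ∀ i, 0 < d i)
    (hfS : ∀ i, f i ∈ S)
    (hrad : ∀ j, ∃ m, (MvPolynomial.X j : MvPolynomial (Fin n) k) ^ m
      ∈ Ideal.span (Set.range f)) :
    Module.Finite S (MvPolynomial (Fin n) k) := by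
  classical
  choose m hm using hrad
  set M : ℕ := (∑ j, m j) + (∑ i, d i) + 1 with hM
  have hmM : ∀ j, m j ≤ M := by
    intro j
    have := Finset.single_le_sum (f := m) (fun _ _ => Nat.zero_le _) (Finset.mem_univ j)
    omega
  have hdM : ∀ i, d i ≤ M := by
    intro i
    have := Finset.single_le_sum (f := d) (fun _ _ => Nat.zero_le _) (Finset.mem_univ i)
    omega
  have hXM : ∀ j, (MvPolynomial.X j : MvPolynomial (Fin n) k) ^ M
      ∈ Ideal.span (Set.range f) := by
    intro j
    have h1 : (MvPolynomial.X j : MvPolynomial (Fin n) k) ^ M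
        = MvPolynomial.X j ^ (M - m j) * MvPolynomial.X j ^ (m j) := by
      rw [← pow_add]
      congr 1
      have := hmM j
      omega
    rw [h1]
    exact Ideal.mul_mem_left _ _ (hm j)
  -- homogeneous representations
  have hrep : ∀ j, ∃ g : Fin n → MvPolynomial (Fin n) k,
      (∀ i, (g i).IsHomogeneous (M - d i)) ∧
      (MvPolynomial.X j : MvPolynomial (Fin n) k) ^ M = ∑ i, g i * f i := by
    intro j
    exact homog_rep n k f d hf M hdM _ (MvPolynomial.isHomogeneous_X_pow j M) (hXM j)
  choose g hg hgeq using hrep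
  set N : ℕ := n * M + 1 with hN
  set T : Set (Fin n →₀ ℕ) := {γ | degOf n γ < N} with hT
  have hTfin : T.Finite := by
    have hsub : T ⊆ (fun γ : Fin n →₀ ℕ => (γ : Fin n → ℕ)) ⁻¹'
        (Set.univ.pi fun _ : Fin n => Set.Iio N) := by
      intro γ hγ
      intro j _
      exact lt_of_le_of_lt (apply_le_degOf n γ j) hγ
    have hpi : (Set.univ.pi fun _ : Fin n => Set.Iio N).Finite :=
      Set.Finite.pi fun _ => Set.finite_Iio N
    exact Set.Finite.subset (hpi.preimage (Function.Injective.injOn (DFunLike.coe_injective))) hsub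
  set G : Set (MvPolynomial (Fin n) k) := (fun γ => MvPolynomial.monomial γ (1 : k)) '' T
    with hG
  have hGfin : G.Finite := hTfin.image _
  -- scalar helpers
  have hsmulk : ∀ (c : k) (x : MvPolynomial (Fin n) k), x ∈ Submodule.span S G →
      c • x ∈ Submodule.span S G := by
    intro c x hx
    have h : (⟨algebraMap k _ c, S.algebraMap_mem c⟩ : S) • x = c • x := by
      rw [Subalgebra.smul_def, algebraMap_smul]
    rw [← h]
    exact Submodule.smul_mem _ _ hx
  have hmulS : ∀ (sel : MvPolynomial (Fin n) k), sel ∈ S →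
      ∀ x ∈ Submodule.span S G, x * sel ∈ Submodule.span S G := by
    intro sel hsel x hx
    have : x * sel = (⟨sel, hsel⟩ : S) • x := by
      rw [Subalgebra.smul_def, smul_eq_mul, mul_comm]
    rw [this]
    exact Submodule.smul_mem _ _ hx
  -- every monomial is in the span
  have claim : ∀ D : ℕ, ∀ γ : Fin n →₀ ℕ, degOf n γ ≤ D →
      MvPolynomial.monomial γ (1 : k) ∈ Submodule.span S G := by
    intro D
    induction D using Nat.strong_induction_on with
    | _ D IH =>
      intro γ hγ
      by_cases hsmall : degOf n γ < N
      · exact Submodule.subset_span ⟨γ, hsmall, rfl⟩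
      · push_neg at hsmall
        -- find a coordinate ≥ M
        have hj : ∃ j, M ≤ γ j := by
          by_contra hcon
          push_neg at hcon
          have hle : ∀ j, γ j ≤ M - 1 := fun j => by have := hcon j; omega
          have : degOf n γ ≤ ∑ j : Fin n, γ j := by
            rw [degOf, Finsupp.sum]
            exact Finset.sum_le_sum_of_subset (Finset.subset_univ _)
          have h2 : ∑ j : Fin n, γ j ≤ ∑ _j : Fin n, (M - 1) :=
            Finset.sum_le_sum fun j _ => hle j
          rw [Finset.sum_const, Finset.card_univ, Fintype.card_fin, smul_eq_mul] at h2
          have hM1 : 1 ≤ M := by omega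
          have : n * (M - 1) < n * M + 1 := by
            have : n * (M - 1) ≤ n * M := Nat.mul_le_mul_left n (by omega)
            omega
          omega
        obtain ⟨j, hjM⟩ := hj
        have hsingle : Finsupp.single j M ≤ γ := by
          rw [Finsupp.single_le_iff]; exact hjM
        set γ' : Fin n →₀ ℕ := γ - Finsupp.single j M with hγ'
        have hγsum : γ' + Finsupp.single j M = γ := tsub_add_cancel_of_le hsingle
        have hdegγ' : degOf n γ' + M = degOf n γ := by
          have := degOf_add n γ' (Finsupp.single j M)
          rw [hγsum] at this
          rw [this]
          congr 1
          rw [degOf, Finsupp.sum_single_index]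
          rfl
        have hmono : MvPolynomial.monomial γ (1 : k)
            = MvPolynomial.monomial γ' 1 * MvPolynomial.X j ^ M := by
          rw [MvPolynomial.X_pow_eq_monomial, MvPolynomial.monomial_mul, hγsum, one_mul]
        rw [hmono, hgeq j, Finset.mul_sum]
        apply Submodule.sum_mem
        intro i _
        rw [← mul_assoc]
        apply hmulS _ (hfS i)
        -- the polynomial monomial γ' 1 * g j i lies in the span
        set q : MvPolynomial (Fin n) k := MvPolynomial.monomial γ' 1 * g j i with hq
        have hqdeg : q.totalDegree < degOf n γ := by
          have h1 : q.totalDegree ≤ (MvPolynomial.monomial γ' (1:k)).totalDegree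
              + (g j i).totalDegree := MvPolynomial.totalDegree_mul _ _
          have h2 : (MvPolynomial.monomial γ' (1:k)).totalDegree = degOf n γ' := by
            rw [MvPolynomial.totalDegree_monomial _ (one_ne_zero)]
            rfl
          have h3 : (g j i).totalDegree ≤ M - d i := (hg j i).totalDegree_le
          have h4 : 0 < d i := hd i
          have h5 : d i ≤ M := hdM i
          have hNM : M ≤ degOf n γ := by
            have := apply_le_degOf n γ j
            omega
          omega
        rw [MvPolynomial.as_sum q]
        apply Submodule.sum_mem
        intro δ hδ
        have hδdeg : degOf n δ < degOf n γ := by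
          have : degOf n δ ≤ q.totalDegree := by
            rw [MvPolynomial.totalDegree]
            exact Finset.le_sup (f := fun s => s.sum fun _ e => e) hδ
          omega
        have hmem : MvPolynomial.monomial δ (1:k) ∈ Submodule.span S G := by
          apply IH (degOf n γ - 1) (by omega) δ (by omega)
        have : MvPolynomial.monomial δ (MvPolynomial.coeff δ q)
            = (MvPolynomial.coeff δ q) • MvPolynomial.monomial δ (1:k) := by
          rw [MvPolynomial.smul_monomial, smul_eq_mul, mul_one]
        rw [this]
        exact hsmulk _ _ hmem
  -- conclude
  have htop : (⊤ : Submodule S (MvPolynomial (Fin n) k)) ≤ Submodule.span S G := by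
    intro q _
    rw [MvPolynomial.as_sum q]
    apply Submodule.sum_mem
    intro δ _
    have hmem := claim (degOf n δ) δ le_rfl
    have : MvPolynomial.monomial δ (MvPolynomial.coeff δ q)
        = (MvPolynomial.coeff δ q) • MvPolynomial.monomial δ (1:k) := by
      rw [MvPolynomial.smul_monomial, smul_eq_mul, mul_one]
    rw [this]
    exact hsmulk _ _ hmem
  refine ⟨?_⟩
  rw [Submodule.fg_def]
  exact ⟨G, hGfin, le_antisymm le_top htop⟩


/-- The polynomial ring `k[ξ₁,…,ξₙ]` is a finitely generated module
over the `k`-subalgebra `S` generated by the reduced principal symbols `σ'(Q)` of the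
nonzero elements `Q` of `B`. -/
theorem statement2 (n : ℕ) (k : Type) [Field k] [CharZero k]
    (P : Fin n → ((Fin n →₀ ℕ) →₀ MvPowerSeries (Fin n) k))
    (hcomm : ∀ i j, toOp n k (P i) * toOp n k (P j) = toOp n k (P j) * toOp n k (P i))
    (hord : ∀ i, 0 < ordOf n k (P i))
    (hchar : Ideal.span (Set.range
        (MvPolynomial.X : Fin n → MvPolynomial (Fin n) (MvPowerSeries (Fin n) k)))
      ≤ (Ideal.span (Set.range fun i => symbolFull n k (P i))).radical)
    (B : Type) [CommRing B] [Algebra k B]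
    (ι : B →ₐ[k] Module.End k (MvPowerSeries (Fin n) k))
    (hinj : Function.Injective ι)
    (hBD : ∀ b : B, ∃ p, toOp n k p = ι b)
    (hPB : ∀ i, toOp n k (P i) ∈ ι.range)
    (S : Subalgebra k (MvPolynomial (Fin n) k))
    (hS : S = Algebra.adjoin k
      {q : MvPolynomial (Fin n) k | ∃ b : B, b ≠ 0 ∧ ∃ p, toOp n k p = ι b ∧ symbol0 n k p = q}) :
    Module.Finite S (MvPolynomial (Fin n) k) := by
  classical
  set f : Fin n → MvPolynomial (Fin n) k := fun i => symbol0 n k (P i) with hfdef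
  set d : Fin n → ℕ := fun i => ordOf n k (P i) with hddef
  have hf : ∀ i, (f i).IsHomogeneous (d i) := fun i => symbol0_isHomogeneous n k (P i)
  have hfS : ∀ i, f i ∈ S := by
    intro i
    obtain ⟨b, hb⟩ := hPB i
    have hPne : P i ≠ 0 := by
      intro h
      have h2 := hord i
      rw [h] at h2
      simp [ordOf] at h2
    have hb0 : b ≠ 0 := by
      intro h
      rw [h, map_zero] at hb
      exact toOp_ne_zero n k (P i) hPne hb.symm
    rw [hS]
    exact Algebra.subset_adjoin ⟨b, hb0, P i, hb.symm, rfl⟩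
  have hrad : ∀ j, ∃ m, (MvPolynomial.X j : MvPolynomial (Fin n) k) ^ m
      ∈ Ideal.span (Set.range f) := by
    intro j
    have hX : (MvPolynomial.X j : MvPolynomial (Fin n) (MvPowerSeries (Fin n) k))
        ∈ (Ideal.span (Set.range fun i => symbolFull n k (P i))).radical :=
      hchar (Ideal.subset_span ⟨j, rfl⟩)
    obtain ⟨m, hmem⟩ := Ideal.mem_radical_iff.mp hX
    set ψ : MvPolynomial (Fin n) (MvPowerSeries (Fin n) k) →+* MvPolynomial (Fin n) k :=
      (MvPolynomial.map (MvPowerSeries.constantCoeff)) with hψ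
    refine ⟨m, ?_⟩
    have hmem2 : ψ (MvPolynomial.X j ^ m)
        ∈ Ideal.map ψ (Ideal.span (Set.range fun i => symbolFull n k (P i))) :=
      Ideal.mem_map_of_mem ψ hmem
    rw [Ideal.map_span] at hmem2
    have himg : ψ '' (Set.range fun i => symbolFull n k (P i)) = Set.range f := by
      rw [← Set.range_comp]
      have hcomp : (ψ ∘ fun i => symbolFull n k (P i)) = f :=
        funext fun i => map_symbolFull n k (P i)
      rw [hcomp]
    rw [himg] at hmem2
    have hXψ : ψ (MvPolynomial.X j ^ m) = MvPolynomial.X j ^ m := by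
      rw [map_pow, hψ, MvPolynomial.map_X]
    rwa [hXψ] at hmem2
  exact finite_of_homog n k S f d hf hord hfS hrad


end
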